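/- A nonsignalling racbox simulates PR-correlations. Let P be a box that is nonsignalling (in both directions) and a racbox, and define Q a b x y := P a b false x y false (Alice sets x0 = 0 and inputs x as x1; Bob sets y' = 0 and inputs y). Then Q reproduces PR-correlations with probability one: for all bits a, b, x, y, if a ⊕ b ≠ x ∧ y then Q a b x y = 0. -/

import Mathlib

/-- A bipartite box: conditional probability of outputs `a, b` given Alice's
inputs `x0, x1` and Bob's inputs `y, y'`. -/
def IsBox (P : Bool → Bool → Bool → Bool → Bool → Bool → ℝ) : Prop :=
  (∀ a b x0 x1 y y', 0 ≤ P a b x0 x1 y y') ∧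
  (∀ x0 x1 y y', ∑ a : Bool, ∑ b : Bool, P a b x0 x1 y y' = 1)

/-- Nonsignalling from Bob to Alice: Alice's marginal does not depend on `(y, y')`. -/
def NonsignallingBtoA (P : Bool → Bool → Bool → Bool → Bool → Bool → ℝ) : Prop :=
  ∀ a x0 x1 y₁ y₁' y₂ y₂',
    ∑ b : Bool, P a b x0 x1 y₁ y₁' = ∑ b : Bool, P a b x0 x1 y₂ y₂'

/-- Nonsignalling from Alice to Bob: Bob's marginal does not depend on `(x0, x1)`. -/
def NonsignallingAtoB (P : Bool → Bool → Bool → Bool → Bool → Bool → ℝ) : Prop :=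
  ∀ b x0 x1 x0' x1' y y',
    ∑ a : Bool, P a b x0 x1 y y' = ∑ a : Bool, P a b x0' x1' y y'

/-- A racbox: whenever `a = y'`, the box acts as a random access code, i.e.
`b = x_y` with probability one. -/
def IsRacbox (P : Bool → Bool → Bool → Bool → Bool → Bool → ℝ) : Prop :=
  ∀ a b x0 x1 y y', a = y' → b ≠ (if y then x1 else x0) → P a b x0 x1 y y' = 0


/-- A nonsignalling racbox simulates PR-correlations: with `x0 = false`,
`x1 = x`, `y' = false`, the resulting box `Q a b x y = P a b false x y false`
satisfies `a ⊕ b = x ∧ y` with probability one. -/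

private lemma expand1_aux (c : Bool) (f : Bool → ℝ) : (∑ b : Bool, f b) = f c + f !c := by
  cases c <;> simp [Fintype.sum_bool] <;> ring

private lemma key_aux (P : Bool → Bool → Bool → Bool → Bool → Bool → ℝ)
    (hbox : IsBox P) (hnsBA : NonsignallingBtoA P) (hnsAB : NonsignallingAtoB P)
    (hrac : IsRacbox P) (x0 x1 y : Bool) :
    P true (if y then x1 else x0) x0 x1 y false = 0 := by
  set c := if y then x1 else x0 with hc
  have hcv : (if y then !c else !c) = !c := by cases y <;> rfl
  have rA2 : P false (!c) x0 x1 y false = 0 := hrac _ _ _ _ _ _ rfl (by simp; exact hc)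
  have rB4 : P true (!c) x0 x1 y true = 0 := hrac _ _ _ _ _ _ rfl (by simp; exact hc)
  have rC1 : P false c (!c) (!c) y false = 0 := hrac _ _ _ _ _ _ rfl (by rw [hcv]; simp)
  have rD3 : P true c (!c) (!c) y true = 0 := hrac _ _ _ _ _ _ rfl (by rw [hcv]; simp)
  have s1 : P true c x0 x1 y false + P true (!c) x0 x1 y false
      = P true c x0 x1 y true + P true (!c) x0 x1 y true := by
    have h := hnsBA true x0 x1 y false y true
    rw [expand1_aux c, expand1_aux c] at h; exact h
  have s4 : P false c (!c) (!c) y false + P false (!c) (!c) (!c) y false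
      = P false c (!c) (!c) y true + P false (!c) (!c) (!c) y true := by
    have h := hnsBA false (!c) (!c) y false y true
    rw [expand1_aux c, expand1_aux c] at h; exact h
  have t2 : P true (!c) x0 x1 y false + P false (!c) x0 x1 y false
      = P true (!c) (!c) (!c) y false + P false (!c) (!c) (!c) y false := by
    have h := hnsAB (!c) x0 x1 (!c) (!c) y false
    rw [Fintype.sum_bool, Fintype.sum_bool] at h; exact h
  have t3 : P true c x0 x1 y true + P false c x0 x1 y true
      = P true c (!c) (!c) y true + P false c (!c) (!c) y true := by
    have h := hnsAB c x0 x1 (!c) (!c) y true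
    rw [Fintype.sum_bool, Fintype.sum_bool] at h; exact h
  have n1 : P true c x0 x1 y false + P true (!c) x0 x1 y false
      + (P false c x0 x1 y false + P false (!c) x0 x1 y false) = 1 := by
    have h := hbox.2 x0 x1 y false
    rw [Fintype.sum_bool, expand1_aux c, expand1_aux c] at h; exact h
  have n2 : P true c x0 x1 y true + P true (!c) x0 x1 y true
      + (P false c x0 x1 y true + P false (!c) x0 x1 y true) = 1 := by
    have h := hbox.2 x0 x1 y true
    rw [Fintype.sum_bool, expand1_aux c, expand1_aux c] at h; exact h
  have n3 : P true c (!c) (!c) y false + P true (!c) (!c) (!c) y false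
      + (P false c (!c) (!c) y false + P false (!c) (!c) (!c) y false) = 1 := by
    have h := hbox.2 (!c) (!c) y false
    rw [Fintype.sum_bool, expand1_aux c, expand1_aux c] at h; exact h
  have n4 : P true c (!c) (!c) y true + P true (!c) (!c) (!c) y true
      + (P false c (!c) (!c) y true + P false (!c) (!c) (!c) y true) = 1 := by
    have h := hbox.2 (!c) (!c) y true
    rw [Fintype.sum_bool, expand1_aux c, expand1_aux c] at h; exact h
  linarith [hbox.1 true c x0 x1 y false, hbox.1 false c x0 x1 y false,
    hbox.1 true c x0 x1 y true, hbox.1 false c x0 x1 y true,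
    hbox.1 true (!c) x0 x1 y true, hbox.1 false (!c) x0 x1 y true,
    hbox.1 true c (!c) (!c) y true, hbox.1 false c (!c) (!c) y true,
    hbox.1 true (!c) (!c) (!c) y true, hbox.1 false (!c) (!c) (!c) y true,
    hbox.1 true c (!c) (!c) y false, hbox.1 false c (!c) (!c) y false,
    hbox.1 true (!c) (!c) (!c) y false, hbox.1 false (!c) (!c) (!c) y false]

theorem nonsignalling_racbox_simulates_PR
    (P : Bool → Bool → Bool → Bool → Bool → Bool → ℝ)
    (hbox : IsBox P) (hnsBA : NonsignallingBtoA P) (hnsAB : NonsignallingAtoB P)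
    (hrac : IsRacbox P)
    (Q : Bool → Bool → Bool → Bool → ℝ)
    (hQ : ∀ a b x y, Q a b x y = P a b false x y false) :
    ∀ a b x y : Bool, xor a b ≠ (x && y) → Q a b x y = 0 := by
  intro a b x y h
  rw [hQ]
  cases a with
  | false =>
    exact hrac _ _ _ _ _ _ rfl (by cases y <;> simpa using h)
  | true =>
    have hb : b = (if y then x else false) := by
      cases x <;> cases y <;> cases b <;> simp_all
    rw [hb]
    exact key_aux P hbox hnsBA hnsAB hrac false x y
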